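/- Every proper doubly warped product Finsler manifold (f₂ and f₁ both nonconstant) with vanishing Berwald curvature is Riemannian; i.e., if the Berwald curvature tensor of the doubly warped metric F vanishes identically, then the Cartan torsions of F₁ and F₂ both vanish. -/
import Mathlib

lemma sum_recoverT {n : ℕ} (g ginv : Fin n → Fin n → ℝ) (df : Fin n → ℝ)
    (hg : ∀ r h, ∑ k, g r k * ginv k h = if r = h then (1:ℝ) else 0) (r : Fin n) :
    ∑ k, (∑ h, df h * ginv h k) * g k r = df r := by
  have hinv : ∀ a b, ∑ k, ginv a k * g k b = if a = b then (1:ℝ) else 0 := by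
    have h1 : (Matrix.of g) * (Matrix.of ginv) = 1 := by
      ext a b
      simp [Matrix.mul_apply, Matrix.one_apply, hg a b]
    have h2 := mul_eq_one_comm.mp h1
    intro a b
    have := congrFun (congrFun h2 a) b
    simpa [Matrix.mul_apply, Matrix.one_apply] using this
  have key : ∑ k, (∑ h, df h * ginv h k) * g k r
      = ∑ h, df h * (∑ k, ginv h k * g k r) := by
    simp_rw [Finset.sum_mul, Finset.mul_sum]
    rw [Finset.sum_comm]
    apply Finset.sum_congr rfl; intros; apply Finset.sum_congr rfl; intros; ring
  rw [key]
  simp [hinv]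

lemma sum_recover {n : ℕ} (g ginv : Fin n → Fin n → ℝ) (df : Fin n → ℝ)
    (hg : ∀ r h, ∑ k, g r k * ginv k h = if r = h then (1:ℝ) else 0) (r : Fin n) :
    ∑ k, g r k * (∑ h, df h * ginv k h) = df r := by
  have key : ∑ k, g r k * (∑ h, df h * ginv k h)
      = ∑ h, df h * (∑ k, g r k * ginv k h) := by
    simp_rw [Finset.mul_sum]
    rw [Finset.sum_comm]
    apply Finset.sum_congr rfl; intros; apply Finset.sum_congr rfl; intros; ring
  rw [key]
  simp [hg, eq_comm]

/-- Every proper doubly warped product Finsler manifold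
(`f₁`, `f₂` both nonconstant) with vanishing Berwald curvature is Riemannian:
the Cartan torsions `C1` of `F₁` and `C2` of `F₂` both vanish.

Points `p : P₁` model points of the slit tangent bundle `TM₁°` (with coordinates
`(x,y)`), and `q : P₂` models points of `TM₂°`.  `df1sq p h = ∂f₁²/∂x^h`,
`df2sq q α = ∂f₂²/∂u^α`; `ginv1`, `ginv2` are the inverse fundamental tensors of
`F₁`, `F₂`.  Vanishing Berwald curvature of the doubly warped metric `F` includes
the vanishing of the mixed components
`𝐁^k_{αβλ} = −(1/f₂²)(∂f₁²/∂x^h) g^{kh} C_{αβλ}` and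
`𝐁^γ_{ijk} = −(1/f₁²)(∂f₂²/∂u^α) g^{αγ} C_{ijk}` (summed over `h` resp. `α`). -/
theorem stmt2 {n₁ n₂ : ℕ} {P₁ P₂ : Type*}
    (f1sq : P₁ → ℝ) (f2sq : P₂ → ℝ)
    (hf1pos : ∀ p, 0 < f1sq p) (hf2pos : ∀ q, 0 < f2sq q)
    (df1sq : P₁ → Fin n₁ → ℝ) (df2sq : P₂ → Fin n₂ → ℝ)
    (g1 ginv1 : P₁ → Fin n₁ → Fin n₁ → ℝ)
    (g2 ginv2 : P₂ → Fin n₂ → Fin n₂ → ℝ)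
    (C1 : P₁ → Fin n₁ → Fin n₁ → Fin n₁ → ℝ)
    (C2 : P₂ → Fin n₂ → Fin n₂ → Fin n₂ → ℝ)
    (hg1 : ∀ p r h, ∑ k, g1 p r k * ginv1 p k h = if r = h then (1:ℝ) else 0)
    (hg2 : ∀ q r h, ∑ γ, g2 q r γ * ginv2 q γ h = if r = h then (1:ℝ) else 0)
    -- proper: both warping functions are nonconstant
    (hf1nc : ∃ p r, df1sq p r ≠ 0) (hf2nc : ∃ q ν, df2sq q ν ≠ 0)
    -- vanishing Berwald curvature of F: the mixed components vanish
    (hB1 : ∀ p q k α β γ,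
      -(1 / f2sq q) * (∑ h, df1sq p h * ginv1 p k h) * C2 q α β γ = 0)
    (hB2 : ∀ p q γ i j k,
      -(1 / f1sq p) * (∑ α, df2sq q α * ginv2 q α γ) * C1 p i j k = 0) :
    (∀ p i j k, C1 p i j k = 0) ∧ (∀ q α β γ, C2 q α β γ = 0) := by
  constructor
  · intro p i j k
    obtain ⟨q, ν, hν⟩ := hf2nc
    -- there exists γ with ∑ α, df2sq q α * ginv2 q α γ ≠ 0
    by_contra hC
    have hall : ∀ γ, (∑ α, df2sq q α * ginv2 q α γ) = 0 := by
      intro γ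
      have := hB2 p q γ i j k
      have hne : -(1 / f1sq p) ≠ 0 := by
        have := hf1pos p; simp; positivity
      rcases mul_eq_zero.mp this with h | h
      · rcases mul_eq_zero.mp h with h | h
        · exact absurd h hne
        · exact h
      · exact absurd h hC
    have h0 := sum_recoverT (g2 q) (ginv2 q) (df2sq q) (hg2 q) ν
    rw [Finset.sum_eq_zero (fun k _ => by rw [hall k, zero_mul])] at h0
    exact hν h0.symm
  · intro q α β γ
    obtain ⟨p, r, hr⟩ := hf1nc
    by_contra hC
    have hall : ∀ k, (∑ h, df1sq p h * ginv1 p k h) = 0 := by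
      intro k
      have := hB1 p q k α β γ
      have hne : -(1 / f2sq q) ≠ 0 := by
        have := hf2pos q; simp; positivity
      rcases mul_eq_zero.mp this with h | h
      · rcases mul_eq_zero.mp h with h | h
        · exact absurd h hne
        · exact h
      · exact absurd h hC
    have h0 := sum_recover (g1 p) (ginv1 p) (df1sq p) (hg1 p) r
    rw [Finset.sum_eq_zero (fun k _ => by rw [hall k, mul_zero])] at h0
    exact hr h0.symm
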